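/- (Lemma 1) Let 1 ≤ m ≤ n. Let A be an m×(n−1) binary matrix with guard bits a_{i,−1} = 1 and a_{i,n−1} = 0, and let B be an (m−1)×n binary matrix with guard bits b_{−1,j} = 1 and b_{m−1,j} = 0. Define Δa_{i,j} = a_{i,j−1} − a_{i,j} and Δb_{i,j} = b_{i−1,j} − b_{i,j} for 0 ≤ i ≤ m−1 and 0 ≤ j ≤ n−1, and set E_d^{mn}(A,B) = (1/2)·Σ_{i,j} (Δa_{i,j})^2 + (1/2)·Σ_{i,j} (Δb_{i,j})^2 + (1/2)·Σ_{i,j} (Δa_{i,j} − Δb_{i,j})^2. If at least one of the row domain-wall condition, the column domain-wall condition, or the dual-permutation condition fails, then E_d^{mn}(A,B) > n. -/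
import Mathlib


/-- Guard-extended row of the matrix `A` (rows of length `n-1`, guard bits
`a_{i,-1} = 1` at shifted index `0` and `a_{i,n-1} = 0` at shifted index `n`). -/
def gA (n : ℕ) (A : ℕ → ℕ → ℤ) (i j : ℕ) : ℤ :=
  if j = 0 then 1 else if j < n then A i (j - 1) else 0

/-- `Δa_{i,j} = a_{i,j-1} - a_{i,j}` computed on the guard-extended rows of `A`. -/
def dA (n : ℕ) (A : ℕ → ℕ → ℤ) (i j : ℕ) : ℤ := gA n A i j - gA n A i (j + 1)

/-- Guard-extended column of the matrix `B` (columns of length `m-1`, guard bits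
`b_{-1,j} = 1` at shifted index `0` and `b_{m-1,j} = 0` at shifted index `m`). -/
def gB (m : ℕ) (B : ℕ → ℕ → ℤ) (i j : ℕ) : ℤ :=
  if i = 0 then 1 else if i < m then B (i - 1) j else 0

/-- `Δb_{i,j} = b_{i-1,j} - b_{i,j}` computed on the guard-extended columns of `B`. -/
def dB (m : ℕ) (B : ℕ → ℕ → ℤ) (i j : ℕ) : ℤ := gB m B i j - gB m B (i + 1) j

/-- Row domain-wall condition: every guard-extended row of the `m × (n-1)` matrix `A`
is a domain-wall vector. -/
def RowDW (m n : ℕ) (A : ℕ → ℕ → ℤ) : Prop :=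
  ∀ i < m, ∃ t ≤ n - 1, ∀ j < n - 1, (j < t → A i j = 1) ∧ (t ≤ j → A i j = 0)

/-- Column domain-wall condition: every guard-extended column of the `(m-1) × n` matrix `B`
is a domain-wall vector. -/
def ColDW (m n : ℕ) (B : ℕ → ℕ → ℤ) : Prop :=
  ∀ j < n, ∃ t ≤ m - 1, ∀ i < m - 1, (i < t → B i j = 1) ∧ (t ≤ i → B i j = 0)

/-- The dual-matrix domain-wall QUBO energy
`E_dᵐⁿ(A,B) = ½ ΣΣ (Δa)² + ½ ΣΣ (Δb)² + ½ ΣΣ (Δa - Δb)²`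
over `0 ≤ i ≤ m-1` and `0 ≤ j ≤ n-1`. -/
def Ed (m n : ℕ) (A B : ℕ → ℕ → ℤ) : ℚ :=
  (1 / 2 : ℚ) * ∑ i ∈ Finset.range m, ∑ j ∈ Finset.range n, (dA n A i j : ℚ) ^ 2 +
  (1 / 2 : ℚ) * ∑ i ∈ Finset.range m, ∑ j ∈ Finset.range n, (dB m B i j : ℚ) ^ 2 +
  (1 / 2 : ℚ) * ∑ i ∈ Finset.range m, ∑ j ∈ Finset.range n,
    ((dA n A i j : ℚ) - (dB m B i j : ℚ)) ^ 2

/-- Dual-permutation condition: for all `i < m` and `j < n`, if `Δa_{i,j} = 1` then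
`Δb_{i,j} = 1`. -/
def DualPerm (m n : ℕ) (A B : ℕ → ℕ → ℤ) : Prop :=
  ∀ i < m, ∀ j < n, dA n A i j = 1 → dB m B i j = 1

/-- Auxiliary: no-ascent binary sequence from 1 to 0 is a domain wall. -/
lemma dw_helper (f : ℕ → ℤ) (N : ℕ)
    (hbin : ∀ k ≤ N, f k = 0 ∨ f k = 1) (h0 : f 0 = 1) (hNz : f N = 0)
    (hna : ∀ k < N, ¬(f k = 0 ∧ f (k + 1) = 1)) :
    ∃ t, 1 ≤ t ∧ t ≤ N ∧ ∀ k ≤ N, (k < t → f k = 1) ∧ (t ≤ k → f k = 0) := by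
  classical
  have hex : ∃ k, k ≤ N ∧ f k = 0 := ⟨N, le_rfl, hNz⟩
  set t := Nat.find hex with ht
  have htspec : t ≤ N ∧ f t = 0 := Nat.find_spec hex
  have htmin : ∀ k < t, ¬(k ≤ N ∧ f k = 0) := fun k hk => Nat.find_min hex hk
  have ht1 : 1 ≤ t := by
    by_contra h
    have ht0 : t = 0 := by omega
    rw [ht0] at htspec
    omega
  have hzero : ∀ d, t + d ≤ N → f (t + d) = 0 := by
    intro d
    induction d with
    | zero => intro _; exact htspec.2
    | succ d ih =>
      intro hle
      have h0' := ih (by omega)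
      have hlt : t + d < N := by omega
      have hnot := hna (t + d) hlt
      rcases hbin (t + d + 1) (by omega) with h | h
      · exact h
      · exact absurd ⟨h0', h⟩ hnot
  refine ⟨t, ht1, htspec.1, fun k hk => ⟨fun hkt => ?_, fun hkt => ?_⟩⟩
  · rcases hbin k hk with h | h
    · exact absurd ⟨hk, h⟩ (htmin k hkt)
    · exact h
  · have := hzero (k - t) (by omega)
    rwa [Nat.add_sub_cancel' hkt] at this

lemma int_mul_pred_nonneg (b : ℤ) : 0 ≤ b * (b - 1) := by
  rcases le_or_gt 1 b with h | h
  · exact mul_nonneg (by omega) (by omega)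
  · exact mul_nonneg_of_nonpos_of_nonpos (by omega) (by omega)

lemma q_sub_b_nonneg (a b : ℤ) (ha : a = 0 ∨ a = 1 ∨ a = -1) :
    0 ≤ a ^ 2 + b ^ 2 - a * b - b := by
  rcases ha with h | h | h <;> subst h
  · nlinarith [int_mul_pred_nonneg b]
  · nlinarith [sq_nonneg (b - 1)]
  · nlinarith [sq_nonneg b]

lemma q_sub_b_ge_one (a b : ℤ) (ha : a = 0 ∨ a = 1 ∨ a = -1)
    (h : a = -1 ∨ (a = 1 ∧ b ≠ 1) ∨ b = -1) :
    1 ≤ a ^ 2 + b ^ 2 - a * b - b := by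
  rcases h with h | ⟨h, hb⟩ | h
  · subst h; nlinarith [sq_nonneg b]
  · subst h
    have h1 : 1 ≤ (b - 1) ^ 2 := by
      rcases lt_or_gt_of_ne hb with h' | h' <;> nlinarith
    nlinarith
  · subst h; rcases ha with h | h | h <;> subst h <;> norm_num

/-- The integer-valued cellwise energy `Δa² + Δb² − Δa·Δb`. -/
def Qd (m n : ℕ) (A B : ℕ → ℕ → ℤ) (i j : ℕ) : ℤ :=
  dA n A i j ^ 2 + dB m B i j ^ 2 - dA n A i j * dB m B i j

lemma Ed_eq_Qd (m n : ℕ) (A B : ℕ → ℕ → ℤ) :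
    Ed m n A B =
      ((∑ i ∈ Finset.range m, ∑ j ∈ Finset.range n, Qd m n A B i j : ℤ) : ℚ) := by
  unfold Ed Qd
  push_cast
  rw [Finset.mul_sum, Finset.mul_sum, Finset.mul_sum, ← Finset.sum_add_distrib,
    ← Finset.sum_add_distrib]
  refine Finset.sum_congr rfl fun i _ => ?_
  rw [Finset.mul_sum, Finset.mul_sum, Finset.mul_sum, ← Finset.sum_add_distrib,
    ← Finset.sum_add_distrib]
  refine Finset.sum_congr rfl fun j _ => ?_
  ring

/-- Lemma 1: if at least one of the row domain-wall, column domain-wall, or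
dual-permutation conditions fails, then `E_dᵐⁿ(A,B) > n`. -/
theorem Ed_gt_of_not_conditions (m n : ℕ) (hm : 1 ≤ m) (hmn : m ≤ n)
    (A B : ℕ → ℕ → ℤ)
    (hA : ∀ i < m, ∀ j < n - 1, A i j = 0 ∨ A i j = 1)
    (hB : ∀ i < m - 1, ∀ j < n, B i j = 0 ∨ B i j = 1)
    (hcond : ¬(RowDW m n A ∧ ColDW m n B ∧ DualPerm m n A B)) :
    (n : ℚ) < Ed m n A B := by
  have hn : 1 ≤ n := le_trans hm hmn
  -- binary values of the guard-extended sequences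
  have hgA : ∀ i < m, ∀ k, gA n A i k = 0 ∨ gA n A i k = 1 := by
    intro i hi k
    unfold gA
    split_ifs with h1 h2
    · right; rfl
    · exact hA i hi (k - 1) (by omega)
    · left; rfl
  have hgB : ∀ j < n, ∀ k, gB m B k j = 0 ∨ gB m B k j = 1 := by
    intro j hj k
    unfold gB
    split_ifs with h1 h2
    · right; rfl
    · exact hB (k - 1) (by omega) j hj
    · left; rfl
  have hdA : ∀ i < m, ∀ j, dA n A i j = 0 ∨ dA n A i j = 1 ∨ dA n A i j = -1 := by
    intro i hi j
    rcases hgA i hi j with h1 | h1 <;> rcases hgA i hi (j + 1) with h2 | h2 <;>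
      rw [dA, h1, h2] <;> norm_num
  -- column sums of Δb telescope to 1
  have hsum : ∀ j < n, ∑ i ∈ Finset.range m, dB m B i j = 1 := by
    intro j hj
    have h : ∑ i ∈ Finset.range m, (gB m B i j - gB m B (i + 1) j)
        = gB m B 0 j - gB m B m j := Finset.sum_range_sub' (fun i => gB m B i j) m
    have h0 : gB m B 0 j = 1 := by simp [gB]
    have hm0 : gB m B m j = 0 := by
      unfold gB
      rw [if_neg (by omega), if_neg (by omega)]
    calc ∑ i ∈ Finset.range m, dB m B i j
        = ∑ i ∈ Finset.range m, (gB m B i j - gB m B (i + 1) j) := rfl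
      _ = gB m B 0 j - gB m B m j := h
      _ = 1 := by rw [h0, hm0]; ring
  -- a witness cell with extra energy
  have hwit : ∃ i₀ < m, ∃ j₀ < n,
      (dA n A i₀ j₀ = -1 ∨ (dA n A i₀ j₀ = 1 ∧ dB m B i₀ j₀ ≠ 1) ∨ dB m B i₀ j₀ = -1) := by
    by_cases hR : RowDW m n A
    · by_cases hC : ColDW m n B
      · have hD : ¬DualPerm m n A B := fun h => hcond ⟨hR, hC, h⟩
        unfold DualPerm at hD
        push_neg at hD
        obtain ⟨i₀, hi₀, j₀, hj₀, h1, h2⟩ := hD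
        exact ⟨i₀, hi₀, j₀, hj₀, Or.inr (Or.inl ⟨h1, h2⟩)⟩
      · by_contra hno
        push_neg at hno
        apply hC
        intro j hj
        have hna : ∀ k < m, ¬(gB m B k j = 0 ∧ gB m B (k + 1) j = 1) := by
          rintro k hk ⟨h0, h1⟩
          have hdb : dB m B k j = -1 := by rw [dB, h0, h1]; ring
          exact (hno k hk j hj).2.2 hdb
        obtain ⟨t, ht1, htm, hpat⟩ := dw_helper (fun k => gB m B k j) m
          (fun k _ => hgB j hj k) (by simp [gB]) (by
            show gB m B m j = 0
            unfold gB; rw [if_neg (by omega), if_neg (by omega)]) hna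
        refine ⟨t - 1, by omega, fun i hi => ⟨fun hit => ?_, fun hti => ?_⟩⟩
        · have h := (hpat (i + 1) (by omega)).1 (by omega)
          simp only [gB, if_neg (by omega : ¬ i + 1 = 0),
            if_pos (by omega : i + 1 < m), Nat.add_sub_cancel] at h
          exact h
        · have h := (hpat (i + 1) (by omega)).2 (by omega)
          simp only [gB, if_neg (by omega : ¬ i + 1 = 0),
            if_pos (by omega : i + 1 < m), Nat.add_sub_cancel] at h
          exact h
    · by_contra hno
      push_neg at hno
      apply hR
      intro i hi
      have hna : ∀ k < n, ¬(gA n A i k = 0 ∧ gA n A i (k + 1) = 1) := by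
        rintro k hk ⟨h0, h1⟩
        have hda : dA n A i k = -1 := by rw [dA, h0, h1]; ring
        exact (hno i hi k hk).1 hda
      obtain ⟨t, ht1, htm, hpat⟩ := dw_helper (fun k => gA n A i k) n
        (fun k _ => hgA i hi k) (by simp [gA]) (by
          show gA n A i n = 0
          unfold gA; rw [if_neg (by omega), if_neg (by omega)]) hna
      refine ⟨t - 1, by omega, fun j hj => ⟨fun hjt => ?_, fun htj => ?_⟩⟩
      · have h := (hpat (j + 1) (by omega)).1 (by omega)
        simp only [gA, if_neg (by omega : ¬ j + 1 = 0),
          if_pos (by omega : j + 1 < n), Nat.add_sub_cancel] at h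
        exact h
      · have h := (hpat (j + 1) (by omega)).2 (by omega)
        simp only [gA, if_neg (by omega : ¬ j + 1 = 0),
          if_pos (by omega : j + 1 < n), Nat.add_sub_cancel] at h
        exact h
  obtain ⟨i₀, hi₀, j₀, hj₀, hw⟩ := hwit
  -- cellwise lower bounds
  have hQb : ∀ i < m, ∀ j, dB m B i j ≤ Qd m n A B i j := by
    intro i hi j
    have := q_sub_b_nonneg (dA n A i j) (dB m B i j) (hdA i hi j)
    unfold Qd
    linarith
  have hcol : ∀ j < n, 1 ≤ ∑ i ∈ Finset.range m, Qd m n A B i j := by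
    intro j hj
    calc (1 : ℤ) = ∑ i ∈ Finset.range m, dB m B i j := (hsum j hj).symm
      _ ≤ ∑ i ∈ Finset.range m, Qd m n A B i j :=
        Finset.sum_le_sum fun i hi => hQb i (Finset.mem_range.1 hi) j
  have hcol₀ : 2 ≤ ∑ i ∈ Finset.range m, Qd m n A B i j₀ := by
    have h1 : 1 ≤ ∑ i ∈ Finset.range m, (Qd m n A B i j₀ - dB m B i j₀) := by
      refine le_trans ?_ (Finset.single_le_sum
        (f := fun i => Qd m n A B i j₀ - dB m B i j₀)
        (fun i hi => sub_nonneg.2 (hQb i (Finset.mem_range.1 hi) j₀))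
        (Finset.mem_range.2 hi₀))
      show (1 : ℤ) ≤ Qd m n A B i₀ j₀ - dB m B i₀ j₀
      have := q_sub_b_ge_one (dA n A i₀ j₀) (dB m B i₀ j₀) (hdA i₀ hi₀ j₀) hw
      unfold Qd
      linarith
    rw [Finset.sum_sub_distrib, hsum j₀ hj₀] at h1
    linarith
  -- assemble
  have hj₀' : j₀ ∈ Finset.range n := Finset.mem_range.2 hj₀
  have hsplit := Finset.sum_erase_add (Finset.range n)
    (fun j => ∑ i ∈ Finset.range m, Qd m n A B i j) hj₀'
  have herase : ((n - 1 : ℕ) : ℤ) ≤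
      ∑ j ∈ (Finset.range n).erase j₀, ∑ i ∈ Finset.range m, Qd m n A B i j := by
    have h := Finset.card_nsmul_le_sum ((Finset.range n).erase j₀)
      (fun j => ∑ i ∈ Finset.range m, Qd m n A B i j) 1
      (fun j hj => hcol j (Finset.mem_range.1 (Finset.mem_of_mem_erase hj)))
    rwa [Finset.card_erase_of_mem hj₀', Finset.card_range, nsmul_eq_mul, mul_one] at h
  have key : (n : ℤ) < ∑ i ∈ Finset.range m, ∑ j ∈ Finset.range n, Qd m n A B i j := by
    rw [Finset.sum_comm, ← hsplit]
    have : ((n - 1 : ℕ) : ℤ) = (n : ℤ) - 1 := by push_cast [Nat.cast_sub hn]; ring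
    rw [this] at herase
    linarith
  rw [Ed_eq_Qd]
  exact_mod_cast key
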